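/- For S ∈ [2, 2√2] and fixed q ∈ [0, 1/2], the function r(S) = 1 − h((1+√((S/2)²−1))/2) + h((1+√(1−q(1−q)(8−S²)))/2) is monotonically nondecreasing in S, where h is the binary entropy. -/

import Mathlib

open Real

noncomputable def binEnt (x : ℝ) : ℝ := -x * Real.logb 2 x - (1 - x) * Real.logb 2 (1 - x)

lemma binEnt_eq (x : ℝ) : binEnt x = Real.binEntropy x / Real.log 2 := by
  simp only [binEnt, Real.binEntropy, Real.logb, Real.log_inv]
  ring

lemma binEnt_continuous : Continuous binEnt := by
  have : binEnt = fun x => Real.binEntropy x / Real.log 2 := funext binEnt_eq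
  rw [this]
  exact Real.binEntropy_continuous.div_const _

lemma hasDerivAt_binEnt {x : ℝ} (h0 : x ≠ 0) (h1 : x ≠ 1) :
    HasDerivAt binEnt ((Real.log (1 - x) - Real.log x) / Real.log 2) x := by
  have : binEnt = fun x => Real.binEntropy x / Real.log 2 := funext binEnt_eq
  rw [this]
  exact (Real.hasDerivAt_binEntropy h0 h1).div_const _

lemma hasDerivAt_binEnt_half {t : ℝ} (h0 : 0 < t) (h1 : t < 1) :
    HasDerivAt (fun t : ℝ => binEnt ((1 + t) / 2))
      (-(Real.log (1 + t) - Real.log (1 - t)) / (2 * Real.log 2)) t := by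
  have ha0 : (1 + t) / 2 ≠ 0 := by positivity
  have ha1 : (1 + t) / 2 ≠ 1 := by intro h; nlinarith [h]
  have hin : HasDerivAt (fun t : ℝ => (1 + t) / 2) (1 / 2) t :=
    ((hasDerivAt_id t).const_add 1).div_const 2
  have := (hasDerivAt_binEnt ha0 ha1).comp t hin
  refine this.congr_deriv ?_
  have e1 : (1 : ℝ) - (1 + t) / 2 = (1 - t) / 2 := by ring
  rw [e1, Real.log_div (by linarith) two_ne_zero, Real.log_div (by linarith) two_ne_zero]
  ring

lemma hasDerivAt_L {t : ℝ} (h0 : -1 < t) (h1 : t < 1) :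
    HasDerivAt (fun t : ℝ => Real.log (1 + t) - Real.log (1 - t))
      (1 / (1 + t) - -1 / (1 - t)) t := by
  have h1t : (1 : ℝ) + t ≠ 0 := by linarith
  have h2t : (1 : ℝ) - t ≠ 0 := by linarith
  exact (((hasDerivAt_id t).const_add 1).log h1t).sub (((hasDerivAt_id t).const_sub 1).log h2t)

lemma log_ratio_ge {t : ℝ} (h0 : 0 ≤ t) (h1 : t < 1) :
    2 * t ≤ Real.log (1 + t) - Real.log (1 - t) := by
  set f : ℝ → ℝ := fun t => Real.log (1 + t) - Real.log (1 - t) - 2 * t with hf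
  have hd : ∀ x ∈ Set.Ioo (0:ℝ) 1, HasDerivAt f (1 / (1 + x) - -1 / (1 - x) - 2 * 1) x := by
    intro x hx
    exact (hasDerivAt_L (by linarith [hx.1]) hx.2).sub ((hasDerivAt_id x).const_mul 2)
  have hmono : MonotoneOn f (Set.Ico (0:ℝ) 1) := by
    apply monotoneOn_of_deriv_nonneg (convex_Ico 0 1)
    · apply ContinuousOn.sub
      apply ContinuousOn.sub
      · exact (continuousOn_const.add continuousOn_id).log fun x hx => by
          simp only [Set.mem_Ico] at hx; intro h; simp only [Pi.add_apply, id] at h; linarith [hx.1]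
      · exact (continuousOn_const.sub continuousOn_id).log fun x hx => by
          simp only [Set.mem_Ico] at hx; intro h; simp only [Pi.sub_apply, id] at h; linarith [hx.2]
      · exact (continuous_const.mul continuous_id).continuousOn
    · rw [interior_Ico]
      intro x hx
      exact (hd x hx).differentiableAt.differentiableWithinAt
    · rw [interior_Ico]
      intro x hx
      rw [(hd x hx).deriv]
      have hx1 : (0:ℝ) < 1 + x := by linarith [hx.1]
      have hx2 : (0:ℝ) < 1 - x := by linarith [hx.2]
      rw [sub_nonneg]
      rw [div_sub_div _ _ (ne_of_gt hx1) (ne_of_gt hx2)]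
      rw [le_div_iff₀ (by positivity)]
      nlinarith [sq_nonneg x]
  rcases eq_or_lt_of_le h0 with h | h
  · simp [← h]
  · have := hmono (Set.mem_Ico.2 ⟨le_refl 0, by norm_num⟩) (Set.mem_Ico.2 ⟨h0, h1⟩) h0
    simp only [hf] at this
    simp only [add_zero, sub_zero, Real.log_one, mul_zero] at this
    linarith
lemma phi_anti {u v : ℝ} (hu : 0 < u) (huv : u ≤ v) (hv : v < 1) :
    (1 - v ^ 2) * (Real.log (1 + v) - Real.log (1 - v)) / v
      ≤ (1 - u ^ 2) * (Real.log (1 + u) - Real.log (1 - u)) / u := by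
  set f : ℝ → ℝ := fun t => (1 - t ^ 2) * (Real.log (1 + t) - Real.log (1 - t)) / t with hf
  have hd : ∀ x ∈ Set.Ioo (0:ℝ) 1, HasDerivAt f
      (((-(2 * x ^ 1) * (Real.log (1 + x) - Real.log (1 - x))
        + (1 - x ^ 2) * (1 / (1 + x) - -1 / (1 - x))) * x
        - (1 - x ^ 2) * (Real.log (1 + x) - Real.log (1 - x)) * 1) / x ^ 2) x := by
    intro x hx
    have hN : HasDerivAt (fun t : ℝ => (1 - t ^ 2) * (Real.log (1 + t) - Real.log (1 - t)))
        (-(2 * x ^ 1) * (Real.log (1 + x) - Real.log (1 - x))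
          + (1 - x ^ 2) * (1 / (1 + x) - -1 / (1 - x))) x := by
      have h1 : HasDerivAt (fun t : ℝ => 1 - t ^ 2) (-(2 * x ^ 1)) x := by
        have := (hasDerivAt_pow 2 x).const_sub 1
        norm_num at this ⊢
        exact this
      exact h1.mul (hasDerivAt_L (by linarith [hx.1]) hx.2)
    exact hN.div (hasDerivAt_id x) (ne_of_gt hx.1)
  have hanti : AntitoneOn f (Set.Ioo (0:ℝ) 1) := by
    apply antitoneOn_of_deriv_nonpos (convex_Ioo 0 1)
    · exact fun x hx => (hd x hx).differentiableAt.continuousAt.continuousWithinAt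
    · rw [interior_Ioo]
      intro x hx
      exact (hd x hx).differentiableAt.differentiableWithinAt
    · rw [interior_Ioo]
      intro x hx
      rw [(hd x hx).deriv]
      apply div_nonpos_of_nonpos_of_nonneg _ (sq_nonneg x)
      have h1 : (0:ℝ) < 1 + x := by linarith [hx.1]
      have h2 : (0:ℝ) < 1 - x := by linarith [hx.2]
      have hsimp : (1 - x ^ 2) * (1 / (1 + x) - -1 / (1 - x)) = 2 := by
        field_simp
        ring
      rw [hsimp]
      have hL := log_ratio_ge (le_of_lt hx.1) hx.2
      have hLnn : 0 ≤ Real.log (1 + x) - Real.log (1 - x) := by linarith [hx.1]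
      nlinarith [mul_nonneg (sq_nonneg x) hLnn]
  exact hanti (Set.mem_Ioo.2 ⟨hu, lt_of_le_of_lt huv hv⟩)
    (Set.mem_Ioo.2 ⟨lt_of_lt_of_le hu huv, hv⟩) huv

lemma key_ineq {u c : ℝ} (hu0 : 0 < u) (hu1 : u < 1) (hc0 : 0 ≤ c) (hc1 : c ≤ 1) :
    c * (Real.log (1 + Real.sqrt (1 - c * (1 - u ^ 2)))
        - Real.log (1 - Real.sqrt (1 - c * (1 - u ^ 2)))) * u
      ≤ (Real.log (1 + u) - Real.log (1 - u)) * Real.sqrt (1 - c * (1 - u ^ 2)) := by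
  set v := Real.sqrt (1 - c * (1 - u ^ 2)) with hvdef
  have hu2 : (0:ℝ) < 1 - u ^ 2 := by nlinarith
  have harg : (0:ℝ) ≤ 1 - c * (1 - u ^ 2) := by nlinarith
  have hv2 : v ^ 2 = 1 - c * (1 - u ^ 2) := Real.sq_sqrt harg
  have hLu : 0 ≤ Real.log (1 + u) - Real.log (1 - u) := by
    have := Real.log_nonneg (by linarith : (1:ℝ) ≤ 1 + u)
    have := Real.log_nonpos (by linarith) (by linarith : 1 - u ≤ 1)
    linarith
  rcases eq_or_lt_of_le hc0 with h | h
  · rw [← h]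
    simp only [zero_mul]
    exact mul_nonneg hLu (Real.sqrt_nonneg _)
  · have hvu : u ≤ v := by
      have h' : Real.sqrt (u ^ 2) ≤ v := Real.sqrt_le_sqrt (by nlinarith)
      rwa [Real.sqrt_sq hu0.le] at h'
    have hv0 : 0 < v := lt_of_lt_of_le hu0 hvu
    have hv1 : v < 1 := by
      rw [← Real.sqrt_one]
      apply Real.sqrt_lt_sqrt harg
      nlinarith
    have hphi := phi_anti hu0 hvu hv1
    rw [div_le_div_iff₀ hv0 hu0] at hphi
    have hcv : c * (1 - u ^ 2) = 1 - v ^ 2 := by rw [hv2]; ring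
    have hmul : c * (1 - u ^ 2) * ((Real.log (1 + v) - Real.log (1 - v)) * u)
        = (1 - v ^ 2) * ((Real.log (1 + v) - Real.log (1 - v)) * u) := by rw [hcv]
    nlinarith [hphi, hmul, hu2]
lemma helper (q S : ℝ) (hq0 : 0 ≤ q) (hq1 : q ≤ 1 / 2) (h2 : 2 < S) (h8 : S ^ 2 < 8) :
    ∃ d, HasDerivAt (fun S : ℝ =>
        1 - binEnt ((1 + Real.sqrt ((S / 2) ^ 2 - 1)) / 2)
          + binEnt ((1 + Real.sqrt (1 - q * (1 - q) * (8 - S ^ 2))) / 2)) d S ∧ 0 ≤ d := by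
  have hS0 : 0 < S := by linarith
  have hlog2 : (0:ℝ) < Real.log 2 := Real.log_pos one_lt_two
  -- facts about u
  have harg1 : (0:ℝ) < (S / 2) ^ 2 - 1 := by nlinarith
  set u := Real.sqrt ((S / 2) ^ 2 - 1) with hudef
  have hu0 : 0 < u := Real.sqrt_pos.2 harg1
  have hu2 : u ^ 2 = (S / 2) ^ 2 - 1 := Real.sq_sqrt harg1.le
  have hu1 : u < 1 := by
    rw [show (1:ℝ) = Real.sqrt 1 by simp [Real.sqrt_one]]
    apply Real.sqrt_lt_sqrt harg1.le
    nlinarith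
  have hLu : 0 ≤ Real.log (1 + u) - Real.log (1 - u) := by
    have := Real.log_nonneg (by linarith : (1:ℝ) ≤ 1 + u)
    have := Real.log_nonpos (by linarith) (by linarith : 1 - u ≤ 1)
    linarith
  -- derivative of first term
  have hin1 : HasDerivAt (fun S : ℝ => Real.sqrt ((S / 2) ^ 2 - 1))
      ((2 * (S / 2) ^ 1 * (1 / 2)) / (2 * u)) S := by
    have h1 : HasDerivAt (fun S : ℝ => (S / 2) ^ 2 - 1) (2 * (S / 2) ^ 1 * (1 / 2)) S := by
      have := (((hasDerivAt_id S).div_const 2).pow 2).sub_const 1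
      norm_num at this ⊢
      convert this using 1
    exact h1.sqrt (ne_of_gt harg1)
  have hT1 : HasDerivAt (fun S : ℝ => binEnt ((1 + Real.sqrt ((S / 2) ^ 2 - 1)) / 2))
      ((-(Real.log (1 + u) - Real.log (1 - u)) / (2 * Real.log 2))
        * ((2 * (S / 2) ^ 1 * (1 / 2)) / (2 * u))) S :=
    by have := (hasDerivAt_binEnt_half hu0 hu1).comp S hin1; exact this
  -- second term
  have hp0 : 0 ≤ q * (1 - q) := by nlinarith
  have hp4 : 4 * (q * (1 - q)) ≤ 1 := by nlinarith
  rcases eq_or_lt_of_le hp0 with hp | hp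
  · -- p = 0, hence q = 0
    have hq : q = 0 := by
      rcases mul_eq_zero.1 hp.symm with h | h
      · exact h
      · linarith
    subst hq
    simp only [zero_mul, mul_zero, sub_zero, Real.sqrt_one]
    refine ⟨-((-(Real.log (1 + u) - Real.log (1 - u)) / (2 * Real.log 2))
        * ((2 * (S / 2) ^ 1 * (1 / 2)) / (2 * u))), ?_, ?_⟩
    · exact ((hT1.const_sub 1).add_const _)
    · rw [show -(-(Real.log (1 + u) - Real.log (1 - u)) / (2 * Real.log 2)
            * (2 * (S / 2) ^ 1 * (1 / 2) / (2 * u)))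
          = ((Real.log (1 + u) - Real.log (1 - u)) * S) / (8 * u * Real.log 2) from by
        field_simp; ring]
      exact div_nonneg (mul_nonneg hLu hS0.le) (by positivity)
  · -- p > 0
    have h8S : 0 < 8 - S ^ 2 := by linarith
    have hw0 : (0:ℝ) < 1 - q * (1 - q) * (8 - S ^ 2) := by nlinarith
    have hw1 : 1 - q * (1 - q) * (8 - S ^ 2) < 1 := by nlinarith
    set v := Real.sqrt (1 - q * (1 - q) * (8 - S ^ 2)) with hvdef
    have hv0 : 0 < v := Real.sqrt_pos.2 hw0
    have hv1 : v < 1 := by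
      rw [show (1:ℝ) = Real.sqrt 1 by simp [Real.sqrt_one]]
      exact Real.sqrt_lt_sqrt hw0.le hw1
    have hin2 : HasDerivAt (fun S : ℝ => Real.sqrt (1 - q * (1 - q) * (8 - S ^ 2)))
        ((-(q * (1 - q) * -(2 * S ^ 1))) / (2 * v)) S := by
      have h1 : HasDerivAt (fun S : ℝ => 1 - q * (1 - q) * (8 - S ^ 2))
          (-(q * (1 - q) * -(2 * S ^ 1))) S := by
        have hsq : HasDerivAt (fun S : ℝ => (8:ℝ) - S ^ 2) (-(2 * S ^ 1)) S := by
          have := (hasDerivAt_pow 2 S).const_sub 8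
          norm_num at this ⊢
          convert this using 1
        exact ((hsq.const_mul (q * (1 - q))).const_sub 1)
      exact h1.sqrt (ne_of_gt hw0)
    have hT2 : HasDerivAt (fun S : ℝ => binEnt ((1 + Real.sqrt (1 - q * (1 - q) * (8 - S ^ 2))) / 2))
        ((-(Real.log (1 + v) - Real.log (1 - v)) / (2 * Real.log 2))
          * ((-(q * (1 - q) * -(2 * S ^ 1))) / (2 * v))) S :=
      by have := (hasDerivAt_binEnt_half hv0 hv1).comp S hin2; exact this
    refine ⟨_, (hT1.const_sub 1).add hT2, ?_⟩
    -- now the inequality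
    have hveq : Real.sqrt (1 - (4 * (q * (1 - q))) * (1 - u ^ 2)) = v := by
      rw [hvdef]
      congr 1
      rw [hu2]; ring
    have hkey := key_ineq hu0 hu1 (by linarith : (0:ℝ) ≤ 4 * (q * (1 - q))) hp4
    rw [hveq] at hkey
    have hLv : 0 ≤ Real.log (1 + v) - Real.log (1 - v) := by
      have := Real.log_nonneg (by linarith : (1:ℝ) ≤ 1 + v)
      have := Real.log_nonpos (by linarith) (by linarith : 1 - v ≤ 1)
      linarith
    have hexp : -((-(Real.log (1 + u) - Real.log (1 - u)) / (2 * Real.log 2))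
          * ((2 * (S / 2) ^ 1 * (1 / 2)) / (2 * u)))
        + (-(Real.log (1 + v) - Real.log (1 - v)) / (2 * Real.log 2))
          * ((-(q * (1 - q) * -(2 * S ^ 1))) / (2 * v))
        = (S / (8 * u * v * Real.log 2)) *
          ((Real.log (1 + u) - Real.log (1 - u)) * v
            - (4 * (q * (1 - q))) * (Real.log (1 + v) - Real.log (1 - v)) * u) := by
      field_simp
      ring
    rw [hexp]
    apply mul_nonneg (by positivity)
    linarith [hkey]

theorem stmt_18 (q : ℝ) (hq0 : 0 ≤ q) (hq1 : q ≤ 1 / 2) :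
    MonotoneOn (fun S : ℝ =>
        1 - binEnt ((1 + Real.sqrt ((S / 2) ^ 2 - 1)) / 2)
          + binEnt ((1 + Real.sqrt (1 - q * (1 - q) * (8 - S ^ 2))) / 2))
      (Set.Icc (2 : ℝ) (2 * Real.sqrt 2)) := by
  have hsq2 : Real.sqrt 2 ^ 2 = 2 := Real.sq_sqrt (by norm_num)
  have hsq2pos : 1 < Real.sqrt 2 := by nlinarith [Real.sqrt_nonneg 2]
  have hmem : ∀ S ∈ interior (Set.Icc (2 : ℝ) (2 * Real.sqrt 2)), 2 < S ∧ S ^ 2 < 8 := by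
    intro S hS
    rw [interior_Icc] at hS
    obtain ⟨h1, h2⟩ := hS
    refine ⟨h1, ?_⟩
    nlinarith
  apply monotoneOn_of_deriv_nonneg (convex_Icc _ _)
  · apply Continuous.continuousOn
    apply Continuous.add
    · apply Continuous.sub continuous_const
      exact binEnt_continuous.comp (by continuity)
    · exact binEnt_continuous.comp (by continuity)
  · intro S hS
    obtain ⟨h1, h2⟩ := hmem S hS
    obtain ⟨d, hd, _⟩ := helper q S hq0 hq1 h1 h2
    exact hd.differentiableAt.differentiableWithinAt
  · intro S hS
    obtain ⟨h1, h2⟩ := hmem S hS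
    obtain ⟨d, hd, hd0⟩ := helper q S hq0 hq1 h1 h2
    rw [hd.deriv]
    exact hd0
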